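/- arXiv:1009.2229 — 4 statements merged into one kernel-verified Lean document; each statement's English description precedes it below -/
import Mathlib

section
/- Let R be a Noetherian ring, M a nonzero Artinian R-module, m a maximal ideal of R in Supp_R(M), and x ∈ m. Then (0 :_{Γ_m(M)} x) ≠ 0, i.e., x has a nonzero annihilator in the m-torsion part of M. -/
/-- The `m`-torsion submodule `Γ_m(M) = {x ∈ M | m^n x = 0 for some n}`. -/
def torsionPart (R : Type*) [CommRing R] (M : Type*) [AddCommGroup M] [Module R M]
    (m : Ideal R) : Submodule R M :=
  ⨆ n : ℕ, Submodule.torsionBySet R M ((m ^ n : Ideal R) : Set R)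

/-- From a nonzero element killed by `m ^ n`, descend to a nonzero element killed by `m`. -/
lemma exists_smul_eq_zero_of_pow_smul_eq_zero
    {R M : Type*} [CommRing R] [AddCommGroup M] [Module R M] (m : Ideal R) :
    ∀ (n : ℕ) (t : M), t ≠ 0 → (∀ a ∈ m ^ n, a • t = 0) →
      ∃ w : M, w ≠ 0 ∧ ∀ a ∈ m, a • w = 0 := by
  intro n
  induction n with
  | zero =>
      intro t ht h
      exact absurd (by simpa using h 1 (by simp [Ideal.one_eq_top])) ht
  | succ n ih =>
      intro t ht h
      by_cases hc : ∀ a ∈ m, a • t = 0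
      · exact ⟨t, ht, hc⟩
      · push_neg at hc
        obtain ⟨a, ha, hat⟩ := hc
        refine ih (a • t) hat (fun b hb => ?_)
        rw [smul_smul]
        exact h (b * a) (by rw [pow_succ]; exact Ideal.mul_mem_mul hb ha)

/-- Let `R` be a Noetherian ring, `M` a nonzero Artinian `R`-module, `m` a
maximal ideal of `R` in the support of `M`, and `x ∈ m`. Then `x` has a nonzero annihilator in
the `m`-torsion part of `M`. -/
theorem exists_ne_zero_smul_eq_zero_torsionPart
    (R M : Type*) [CommRing R] [IsNoetherianRing R]
    [AddCommGroup M] [Module R M] [IsArtinian R M] [Nontrivial M]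
    (m : Ideal R) (hm : m.IsMaximal)
    (hsupp : (⟨m, hm.isPrime⟩ : PrimeSpectrum R) ∈ Module.support R M)
    (x : R) (hx : x ∈ m) :
    ∃ u ∈ torsionPart R M m, u ≠ 0 ∧ x • u = 0 := by
  -- Get `v : M` whose annihilator avoids the complement of `m`.
  obtain ⟨v, hv⟩ := (Module.mem_support_iff' (p := ⟨m, hm.isPrime⟩)).mp hsupp
  set N : Submodule R M := R ∙ v with hN
  -- The descending chain `m ^ n • N` stabilizes.
  have hmono : ∀ {i j : ℕ}, i ≤ j → m ^ j • N ≤ m ^ i • N :=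
    fun {i j} hij => Submodule.smul_mono_left (Ideal.pow_le_pow_right hij)
  obtain ⟨n, hn⟩ := IsArtinian.monotone_stabilizes (R := R) (M := M)
    ⟨fun k => OrderDual.toDual (m ^ k • N), fun i j hij => hmono hij⟩
  set K : Submodule R M := m ^ n • N with hK
  have hstab : m ^ (n + 1) • N = K := (congrArg OrderDual.ofDual (hn (n + 1) (by omega))).symm
  have hle : K ≤ m • K := by
    have h1 : m • K = m ^ (n + 1) • N := by
      rw [hK, ← Submodule.smul_assoc, smul_eq_mul, ← pow_succ']
    rw [h1, hstab]
  -- `K` is finitely generated since it sits inside the Noetherian module `N`.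
  have hNfg : N.FG := Submodule.fg_span_singleton v
  have hKleN : K ≤ N := Submodule.smul_le.2 fun r _ u hu => N.smul_mem r hu
  haveI : IsNoetherian R N := isNoetherian_of_fg_of_noetherian N hNfg
  have hKfg : K.FG := by
    have h2 : (K.comap N.subtype).FG := IsNoetherian.noetherian _
    have h3 := h2.map N.subtype
    rwa [Submodule.map_comap_subtype, inf_eq_right.mpr hKleN] at h3
  -- Nakayama: some `r ≡ 1 mod m` kills `K`.
  obtain ⟨r, hr1, hr0⟩ :=
    Submodule.exists_sub_one_mem_and_smul_eq_zero_of_fg_of_le_smul m K hKfg hle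
  have hrm : r ∉ m := by
    intro hrmem
    exact hm.ne_top (Ideal.eq_top_of_isUnit_mem m
      (show r - (r - 1) ∈ m from m.sub_mem hrmem hr1) (by simp))
  -- `t := r • v` is a nonzero element killed by `m ^ n`.
  have ht : r • v ≠ 0 := hv r hrm
  have htors : ∀ a ∈ m ^ n, a • (r • v) = 0 := by
    intro a ha
    rw [smul_comm]
    exact hr0 _ (Submodule.smul_mem_smul ha (Submodule.mem_span_singleton_self v))
  -- Descend to a nonzero element `w` killed by `m` itself.
  obtain ⟨w, hwne, hwm⟩ := exists_smul_eq_zero_of_pow_smul_eq_zero m n (r • v) ht htors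
  have hw1 : w ∈ Submodule.torsionBySet R M ((m ^ 1 : Ideal R) : Set R) :=
    (Submodule.mem_torsionBySet_iff _ _).mpr fun a => hwm a (by simpa using a.2)
  exact ⟨w, (le_iSup (fun k => Submodule.torsionBySet R M ((m ^ k : Ideal R) : Set R)) 1) hw1,
    hwne, hwm x hx⟩
end

section
/- Let R be a Noetherian ring and M a nonzero Artinian R-module. If I is an ideal of R contained in J(M) = ⋂_{m ∈ Supp_R(M)} m, then (0 :_M I) ≠ 0. -/
/-- `J(M)`, the intersection of all maximal ideals lying in the support of `M`. -/
def suppJacobson (R : Type*) [CommRing R] (M : Type*) [AddCommGroup M] [Module R M] :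
    Ideal R :=
  sInf {m : Ideal R | ∃ h : m.IsMaximal,
    (⟨m, h.isPrime⟩ : PrimeSpectrum R) ∈ Module.support R M}

/-- Let `R` be a Noetherian ring and `M` a nonzero Artinian `R`-module. If `I`
is an ideal of `R` contained in `J(M)`, then `(0 :_M I) ≠ 0`. -/
theorem torsionBySet_ne_bot_of_le_suppJacobson
    (R M : Type*) [CommRing R] [IsNoetherianRing R]
    [AddCommGroup M] [Module R M] [IsArtinian R M] [Nontrivial M]
    (I : Ideal R) (hI : I ≤ suppJacobson R M) :
    Submodule.torsionBySet R M (I : Set R) ≠ ⊥ := by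
  -- the lattice of submodules of an Artinian module is atomic
  obtain ⟨N, hNatom, -⟩ :=
    (IsAtomic.eq_bot_or_exists_atom_le (⊤ : Submodule R M)).resolve_left
      (by simp)
  have : IsSimpleModule R N := isSimpleModule_iff_isAtom.2 hNatom
  have hmax : (Module.annihilator R N).IsMaximal := IsSimpleModule.annihilator_isMaximal
  obtain ⟨x, hxN, hx0⟩ := N.ne_bot_iff.mp hNatom.1
  -- the span of a nonzero element of the atom `N` is `N`
  have hspan : (Submodule.span R {x} : Submodule R M) = N := by
    rcases hNatom.le_iff.mp (Submodule.span_le.mpr (Set.singleton_subset_iff.mpr hxN)) with h | h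
    · exact absurd (Submodule.span_eq_bot.mp h x rfl) hx0
    · exact h
  -- the annihilator of `N` is a maximal ideal in the support of `M`
  have hsupp : Module.annihilator R N ∈ {m : Ideal R | ∃ h : m.IsMaximal,
      (⟨m, h.isPrime⟩ : PrimeSpectrum R) ∈ Module.support R M} := by
    refine ⟨hmax, Module.mem_support_iff_exists_annihilator.mpr ⟨x, ?_⟩⟩
    show (Submodule.span R {x}).annihilator ≤ Module.annihilator R N
    rw [hspan]
  have hIN : I ≤ Module.annihilator R N := hI.trans (sInf_le hsupp)
  refine (Submodule.ne_bot_iff _).mpr ⟨x, ?_, hx0⟩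
  rw [Submodule.mem_torsionBySet_iff]
  intro ⟨r, hr⟩
  exact Submodule.mem_annihilator.mp (hIN hr) x hxN
end

section
/- Let R be a Noetherian ring and M an Artinian R-module such that Ann_R(0 :_M p) = p for every prime ideal p ⊇ Ann_R(M). Then for every ideal I of R, the radical of Ann_R(0 :_M I) equals the radical of I + Ann_R(M). -/
/-- Let `R` be a Noetherian ring and `M` an Artinian `R`-module such that
`Ann_R(0 :_M p) = p` for every prime ideal `p ⊇ Ann_R(M)`. Then for every ideal `I` of `R`,
`√(Ann_R(0 :_M I)) = √(I + Ann_R M)`. -/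
theorem radical_annihilator_torsionBySet
    (R M : Type*) [CommRing R] [IsNoetherianRing R]
    [AddCommGroup M] [Module R M] [IsArtinian R M]
    (h : ∀ p : Ideal R, p.IsPrime → Module.annihilator R M ≤ p →
      (Submodule.torsionBySet R M (p : Set R)).annihilator = p) :
    ∀ I : Ideal R,
      (Submodule.torsionBySet R M (I : Set R)).annihilator.radical
        = (I + Module.annihilator R M).radical := by
  intro I
  apply le_antisymm
  · rw [Ideal.radical_eq_sInf (I + Module.annihilator R M)]
    apply le_sInf
    rintro p ⟨hIp, hp⟩
    have hA : Module.annihilator R M ≤ p := le_trans le_sup_right hIp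
    have hI : I ≤ p := le_trans le_sup_left hIp
    have key : (Submodule.torsionBySet R M (I : Set R)).annihilator ≤ p := by
      rw [← h p hp hA]
      apply Submodule.annihilator_mono
      exact Submodule.torsionBySet_le_torsionBySet_of_subset hI
    calc (Submodule.torsionBySet R M (I : Set R)).annihilator.radical
        ≤ p.radical := Ideal.radical_mono key
      _ = p := hp.radical
  · apply Ideal.radical_mono
    apply sup_le
    · intro r hr
      rw [Submodule.mem_annihilator]
      intro m hm
      exact (Submodule.mem_torsionBySet_iff _ _).mp hm ⟨r, hr⟩
    · intro r hr
      rw [Submodule.mem_annihilator]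
      intro m _
      exact Module.mem_annihilator.mp hr m
end

section
/- Let (R, m) be a Noetherian local ring and M an Artinian R-module containing a submodule isomorphic to the injective hull E(R/m) of the residue field. Then Ann_R(0 :_M p) = p for every prime ideal p of R containing Ann_R(M). -/
universe v

section SmallAux

variable {R : Type*} [CommRing R]

/-- A module with a small submodule and small quotient is small. -/
lemma small_of_submodule_of_quotient {N : Type*} [AddCommGroup N] [Module R N]
    (A : Submodule R N) (h1 : Small.{v} A) (h2 : Small.{v} (N ⧸ A)) : Small.{v} N := by
  have key : ∀ n : N, n - Quotient.out (Submodule.Quotient.mk n : N ⧸ A) ∈ A := by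
    intro n
    rw [← Submodule.Quotient.eq]
    exact ((Quotient.out_eq (Submodule.Quotient.mk n : N ⧸ A)).symm)
  have hinj : Function.Injective (fun n : N =>
      ((Submodule.Quotient.mk n : N ⧸ A), (⟨_, key n⟩ : A))) := by
    intro a b hab
    have h1' : (Submodule.Quotient.mk a : N ⧸ A) = Submodule.Quotient.mk b :=
      congrArg Prod.fst hab
    have h2' : a - Quotient.out (Submodule.Quotient.mk a : N ⧸ A)
        = b - Quotient.out (Submodule.Quotient.mk b : N ⧸ A) :=
      congrArg (fun x => ((Prod.snd x : A) : N)) hab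
    rw [h1'] at h2'
    exact sub_left_injective h2'
  exact small_of_injective hinj

/-- A finitely generated module killed by an ideal `m` with small `R ⧸ m` is small. -/
lemma small_of_fg_of_smul_eq_zero (m : Ideal R) [Small.{v} (R ⧸ m)]
    (N : Type*) [AddCommGroup N] [Module R N] [Module.Finite R N]
    (h : ∀ s ∈ m, ∀ n : N, s • n = 0) : Small.{v} N := by
  obtain ⟨d, s, hs⟩ := Module.Finite.exists_fin (R := R) (M := N)
  have hout : ∀ (a : R) (n : N), (Quotient.out (Ideal.Quotient.mk m a) : R) • n = a • n := by
    intro a n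
    have hmem : (Quotient.out (Ideal.Quotient.mk m a) : R) - a ∈ m := by
      rw [← Ideal.Quotient.eq]
      exact Quotient.out_eq _
    have h0 := h _ hmem n
    rw [sub_smul] at h0
    exact sub_eq_zero.mp h0
  have hsurj : Function.Surjective
      (fun g : Fin d → R ⧸ m => ∑ i, (Quotient.out (g i) : R) • s i) := by
    intro n
    have hn : n ∈ Submodule.span R (Set.range s) := hs ▸ Submodule.mem_top
    obtain ⟨c, hc⟩ := (Submodule.mem_span_range_iff_exists_fun R).mp hn
    refine ⟨fun i => Ideal.Quotient.mk m (c i), ?_⟩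
    simp only
    rw [← hc]
    exact Finset.sum_congr rfl fun i _ => hout (c i) (s i)
  exact small_of_surjective hsurj

/-- A finitely generated module killed by a power of `m` is small. -/
lemma small_of_fg_of_pow_smul_eq_zero [IsNoetherianRing R] (m : Ideal R) [Small.{v} (R ⧸ m)] :
    ∀ (c : ℕ) (N : Type*) [AddCommGroup N] [Module R N] [Module.Finite R N],
      (∀ s ∈ m ^ c, ∀ n : N, s • n = 0) → Small.{v} N := by
  intro c
  induction c with
  | zero =>
    intro N _ _ _ h
    have : Subsingleton N := by
      refine ⟨fun a b => ?_⟩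
      have ha := h 1 (by rw [pow_zero, Ideal.one_eq_top]; exact Submodule.mem_top) a
      have hb := h 1 (by rw [pow_zero, Ideal.one_eq_top]; exact Submodule.mem_top) b
      rw [one_smul] at ha hb
      rw [ha, hb]
    exact small_subsingleton N
  | succ c ih =>
    intro N _ _ _ h
    let A : Submodule R N := m • ⊤
    have hANoeth : IsNoetherian R N := isNoetherian_of_isNoetherianRing_of_finite R N
    have hAfg : Module.Finite R A := by
      rw [Module.Finite.iff_fg]
      exact IsNoetherian.noetherian A
    have hkillA : ∀ s ∈ m ^ c, ∀ a : A, s • a = 0 := by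
      intro t ht a
      have : t • (a : N) = 0 := by
        refine Submodule.smul_induction_on a.2 (fun u hu n _ => ?_) (fun x y hx hy => ?_)
        · rw [smul_smul]
          exact h (t * u) (by rw [pow_succ]; exact Ideal.mul_mem_mul ht hu) n
        · rw [smul_add, hx, hy, add_zero]
      exact Subtype.ext (by simpa using this)
    have hA : Small.{v} A := ih A hkillA
    have hQfg : Module.Finite R (N ⧸ A) := Module.Finite.quotient R A
    have hkillQ : ∀ s ∈ m, ∀ x : N ⧸ A, s • x = 0 := by
      intro t ht x
      obtain ⟨n, rfl⟩ := Submodule.Quotient.mk_surjective A x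
      rw [← Submodule.Quotient.mk_smul, Submodule.Quotient.mk_eq_zero]
      exact Submodule.smul_mem_smul ht Submodule.mem_top
    have hQ : Small.{v} (N ⧸ A) := small_of_fg_of_smul_eq_zero m (N ⧸ A) hkillQ
    exact small_of_submodule_of_quotient A hA hQ

/-- A Noetherian local ring with small residue field is small. -/
lemma small_of_residue_small [IsNoetherianRing R] [IsLocalRing R]
    [Small.{v} (R ⧸ IsLocalRing.maximalIdeal R)] : Small.{v} R := by
  set m := IsLocalRing.maximalIdeal R with hm
  have hsmall : ∀ n : ℕ, Small.{v} (R ⧸ m ^ n) := by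
    intro n
    refine small_of_fg_of_pow_smul_eq_zero m n (R ⧸ m ^ n) ?_
    intro t ht x
    obtain ⟨a, rfl⟩ := Submodule.Quotient.mk_surjective _ x
    rw [← Submodule.Quotient.mk_smul, Submodule.Quotient.mk_eq_zero]
    exact Ideal.mul_mem_right a _ ht
  have hK : (⨅ n : ℕ, m ^ n) = ⊥ :=
    Ideal.iInf_pow_eq_bot_of_isLocalRing m (IsLocalRing.maximalIdeal.isMaximal R).ne_top
  have hinj : Function.Injective
      (fun r : R => fun n : ℕ => (Submodule.Quotient.mk r : R ⧸ m ^ n)) := by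
    intro a b hab
    have hmem : a - b ∈ (⨅ n : ℕ, m ^ n) := by
      rw [Submodule.mem_iInf]
      intro n
      rw [← Submodule.Quotient.eq]
      exact congrFun hab n
    rw [hK] at hmem
    exact sub_eq_zero.mp hmem
  haveI := hsmall
  exact small_of_injective hinj

end SmallAux

/-- Let `(R, m)` be a Noetherian local ring and `M` an Artinian `R`-module
containing a submodule isomorphic to the injective hull `E(R/m)` of the residue field (an
injective module `E` in which the image of `R/m` is essential). Then `Ann_R(0 :_M p) = p` for
every prime ideal `p ⊇ Ann_R(M)`. -/
theorem annihilator_torsionBySet_eq_of_contains_injective_hull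
    (R M : Type*) [CommRing R] [IsNoetherianRing R] [IsLocalRing R]
    [AddCommGroup M] [Module R M] [IsArtinian R M]
    (E : Type*) [AddCommGroup E] [Module R E]
    (hEinj : Module.Injective R E)
    (i : (R ⧸ IsLocalRing.maximalIdeal R) →ₗ[R] E) (hi : Function.Injective i)
    (hess : ∀ N : Submodule R E, N ≠ ⊥ → N ⊓ LinearMap.range i ≠ ⊥)
    (j : E →ₗ[R] M) (hj : Function.Injective j) :
    ∀ p : Ideal R, p.IsPrime → Module.annihilator R M ≤ p →
      (Submodule.torsionBySet R M (p : Set R)).annihilator = p := by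
  intro p hp _
  -- `R` is small in the universe of `E`
  haveI hsmallres : Small.{_} (R ⧸ IsLocalRing.maximalIdeal R) := small_of_injective hi
  haveI hsmallR : Small.{_} R := small_of_residue_small
  have hbaer : Module.Baer R E := Module.Baer.of_injective hEinj
  have hpm : p ≤ IsLocalRing.maximalIdeal R := IsLocalRing.le_maximalIdeal hp.ne_top
  refine le_antisymm ?_ ?_
  · -- hard direction
    intro r hr
    by_contra hrp
    -- multiplication by r on R ⧸ p
    have hcomap : (p : Submodule R R) ≤
        Submodule.comap (LinearMap.lsmul R R r) (p : Submodule R R) := by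
      intro s hs
      refine Submodule.mem_comap.mpr ?_
      simpa [LinearMap.lsmul_apply, smul_eq_mul] using Ideal.mul_mem_left p r hs
    let u : (R ⧸ p) →ₗ[R] (R ⧸ p) := Submodule.mapQ _ _ (LinearMap.lsmul R R r) hcomap
    have hu : Function.Injective u := by
      intro a b hab
      obtain ⟨x, rfl⟩ := Submodule.Quotient.mk_surjective _ a
      obtain ⟨y, rfl⟩ := Submodule.Quotient.mk_surjective _ b
      rw [Submodule.mapQ_apply, Submodule.mapQ_apply, Submodule.Quotient.eq] at hab
      rw [Submodule.Quotient.eq]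
      have hmul : r * (x - y) ∈ p := by
        simpa [LinearMap.lsmul_apply, smul_eq_mul, mul_sub] using hab
      rcases hp.mem_or_mem hmul with hc | hc
      · exact absurd hc hrp
      · exact hc
    have hcomap2 : (p : Submodule R R) ≤
        Submodule.comap LinearMap.id
          ((IsLocalRing.maximalIdeal R : Ideal R) : Submodule R R) := by
      intro s hs
      exact Submodule.mem_comap.mpr (hpm hs)
    let π : (R ⧸ p) →ₗ[R] (R ⧸ IsLocalRing.maximalIdeal R) :=
      Submodule.mapQ _ _ LinearMap.id hcomap2
    let g : (R ⧸ p) →ₗ[R] E := i ∘ₗ π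
    obtain ⟨h, hh⟩ := hbaer.extension_property u hu g
    set e0 : E := h (Submodule.Quotient.mk 1) with he0
    have hpe0 : ∀ s ∈ p, s • e0 = 0 := by
      intro s hs
      rw [he0, ← map_smul, ← Submodule.Quotient.mk_smul]
      have hz : (Submodule.Quotient.mk (s • (1 : R)) : R ⧸ p) = 0 := by
        rw [Submodule.Quotient.mk_eq_zero]
        simpa using hs
      rw [hz, map_zero]
    have hre0 : r • e0 = i (Submodule.Quotient.mk 1) := by
      have h2 := LinearMap.congr_fun hh (Submodule.Quotient.mk 1 : R ⧸ p)
      rw [LinearMap.comp_apply] at h2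
      calc r • e0 = h (r • Submodule.Quotient.mk 1) := (map_smul h r _).symm
        _ = h (u (Submodule.Quotient.mk 1)) := by
              rw [Submodule.mapQ_apply, ← Submodule.Quotient.mk_smul]
              rfl
        _ = g (Submodule.Quotient.mk 1) := h2
        _ = i (π (Submodule.Quotient.mk 1)) := rfl
        _ = i (Submodule.Quotient.mk 1) := by
              rw [show π (Submodule.Quotient.mk 1 : R ⧸ p)
                  = (Submodule.Quotient.mk ((1:R)) : R ⧸ IsLocalRing.maximalIdeal R) from
                Submodule.mapQ_apply _ _ _ _]
    have hne : i (Submodule.Quotient.mk 1 : R ⧸ IsLocalRing.maximalIdeal R) ≠ 0 := by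
      intro h0
      have hzz : (Submodule.Quotient.mk 1 : R ⧸ IsLocalRing.maximalIdeal R) = 0 := by
        apply hi
        rw [h0, map_zero]
      have h1m : (1 : R) ∈ IsLocalRing.maximalIdeal R :=
        (Submodule.Quotient.mk_eq_zero _).mp hzz
      exact (IsLocalRing.maximalIdeal.isMaximal R).ne_top
        (Ideal.eq_top_of_isUnit_mem _ h1m isUnit_one)
    -- j e0 is in the torsion submodule
    have hmem : j e0 ∈ Submodule.torsionBySet R M (p : Set R) := by
      rw [Submodule.mem_torsionBySet_iff]
      rintro ⟨s, hs⟩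
      rw [← map_smul, hpe0 s hs, map_zero]
    have := Submodule.mem_annihilator.mp hr (j e0) hmem
    rw [← map_smul] at this
    have : r • e0 = 0 := hj (by rw [this, map_zero])
    rw [hre0] at this
    exact hne this
  · -- easy direction
    intro s hs
    rw [Submodule.mem_annihilator]
    intro n hn
    exact (Submodule.mem_torsionBySet_iff _ _).mp hn ⟨s, hs⟩
end
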